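/- Privacy of the Gaussian mechanism: let Δ > 0, let 0 < ε < 1 and 0 < δ < 1, and set σ = √(2 log(1.25/δ)) · Δ/ε. Then for all real numbers μ, μ' with |μ − μ'| ≤ Δ and every measurable set S ⊆ ℝ, the Gaussian measures satisfy N(μ, σ²)(S) ≤ e^ε · N(μ', σ²)(S) + δ. (Equivalently, the mechanism that outputs q(X) + N(0, σ²) for a real-valued query q of sensitivity Δ is (ε, δ)-differentially private.) -/

import Mathlib

open MeasureTheory Real ProbabilityTheory


lemma std_pdf_eq (x : ℝ) :
    gaussianPDFReal 0 1 x = (Real.sqrt (2*π))⁻¹ * Real.exp (-(1/2) * x^2) := by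
  rw [gaussianPDFReal]
  norm_num [mul_comm]
  left; ring_nf

lemma std_half : ∫ x in Set.Ioi (0:ℝ), gaussianPDFReal 0 1 x = 1/2 := by
  simp_rw [std_pdf_eq]
  rw [integral_const_mul, integral_gaussian_Ioi]
  rw [show π / (1/2) = 2*π by ring]
  rw [inv_mul_eq_div, div_div, div_eq_iff (by positivity)]
  ring

lemma shift_integral (t : ℝ) :
    ∫ x in Set.Ioi t, gaussianPDFReal 0 1 (x - t) = ∫ x in Set.Ioi (0:ℝ), gaussianPDFReal 0 1 x := by
  have A : MeasurableEmbedding (fun x : ℝ => x + t) :=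
    (Homeomorph.addRight t).isClosedEmbedding.measurableEmbedding
  have h := A.setIntegral_map (μ := volume) (fun x => gaussianPDFReal 0 1 (x - t)) (Set.Ioi t)
  rw [map_add_right_eq_self volume t] at h
  rw [h]
  have : (fun x : ℝ => x + t) ⁻¹' Set.Ioi t = Set.Ioi 0 := by ext x; simp
  rw [this]
  simp

lemma pdf_shift (t x : ℝ) : gaussianPDFReal 0 1 (x - t) = gaussianPDFReal t 1 x := by
  simp [gaussianPDFReal]

lemma tail_pos (t : ℝ) (ht : 0 ≤ t) :
    ∫ x in Set.Ioi t, gaussianPDFReal 0 1 x ≤ Real.exp (-(t^2)/2) / 2 := by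
  have hmono : ∀ x ∈ Set.Ioi t,
      gaussianPDFReal 0 1 x ≤ Real.exp (-(t^2)/2) * gaussianPDFReal 0 1 (x - t) := by
    intro x hx
    rw [std_pdf_eq, std_pdf_eq, mul_comm (Real.exp (-(t^2)/2)), mul_assoc, ← Real.exp_add]
    refine mul_le_mul_of_nonneg_left (Real.exp_le_exp.mpr ?_) (by positivity)
    have hx' : t < x := hx
    nlinarith
  have hint2 : IntegrableOn (fun x => Real.exp (-(t^2)/2) * gaussianPDFReal 0 1 (x - t))
      (Set.Ioi t) volume := by
    simp_rw [pdf_shift]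
    exact ((integrable_gaussianPDFReal t 1).const_mul _).integrableOn
  calc ∫ x in Set.Ioi t, gaussianPDFReal 0 1 x
      ≤ ∫ x in Set.Ioi t, Real.exp (-(t^2)/2) * gaussianPDFReal 0 1 (x - t) :=
        setIntegral_mono_on (integrable_gaussianPDFReal 0 1).integrableOn hint2
          measurableSet_Ioi hmono
    _ = Real.exp (-(t^2)/2) * ∫ x in Set.Ioi t, gaussianPDFReal 0 1 (x - t) :=
        integral_const_mul _ _
    _ = Real.exp (-(t^2)/2) / 2 := by rw [shift_integral, std_half]; ring

lemma tail_neg (t : ℝ) (ht : t < 0) :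
    ∫ x in Set.Ioi t, gaussianPDFReal 0 1 x ≤ 1/2 + (-t) * (Real.sqrt (2*π))⁻¹ := by
  have hsplit : Set.Ioc t 0 ∪ Set.Ioi (0:ℝ) = Set.Ioi t := Set.Ioc_union_Ioi_eq_Ioi ht.le
  have hdisj : Disjoint (Set.Ioc t (0:ℝ)) (Set.Ioi 0) := Set.Ioc_disjoint_Ioi le_rfl
  rw [← hsplit, setIntegral_union hdisj measurableSet_Ioi
    (integrable_gaussianPDFReal 0 1).integrableOn (integrable_gaussianPDFReal 0 1).integrableOn]
  rw [std_half, add_comm]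
  gcongr ?_ + ?_
  · exact le_rfl
  have hb : ∀ x ∈ Set.Ioc t (0:ℝ), gaussianPDFReal 0 1 x ≤ (Real.sqrt (2*π))⁻¹ := by
    intro x _
    rw [std_pdf_eq]
    nth_rewrite 2 [← mul_one ((Real.sqrt (2*π))⁻¹)]
    refine mul_le_mul_of_nonneg_left (Real.exp_le_one_iff.mpr (by nlinarith [sq_nonneg x])) (by positivity)
  calc ∫ x in Set.Ioc t 0, gaussianPDFReal 0 1 x
      ≤ ∫ _x in Set.Ioc t 0, (Real.sqrt (2*π))⁻¹ :=
        setIntegral_mono_on (integrable_gaussianPDFReal 0 1).integrableOn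
          (integrableOn_const (by simp [Real.volume_Ioc]))
          measurableSet_Ioc hb
    _ = (volume (Set.Ioc t 0)).toReal * (Real.sqrt (2*π))⁻¹ := by
        rw [setIntegral_const, smul_eq_mul, measureReal_def]
    _ ≤ (-t) * (Real.sqrt (2*π))⁻¹ := by
        rw [Real.volume_Ioc, ENNReal.toReal_ofReal (by linarith)]
        norm_num

set_option maxHeartbeats 1000000 in
lemma tail_le_delta (ε δ L s t : ℝ) (hε0 : 0 < ε) (hε1 : ε < 1) (hδ0 : 0 < δ) (hδ1 : δ < 1)
    (hLdef : L = Real.log (1.25/δ)) (hsdef : s = Real.sqrt (2*L)) (htdef : t = s - ε/(2*s)) :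
    gaussianReal 0 1 (Set.Ioi t) ≤ ENNReal.ofReal δ := by
  have hq : (1:ℝ) < 1.25/δ := by rw [lt_div_iff₀ hδ0]; linarith
  have hL0 : 0 < L := hLdef ▸ Real.log_pos hq
  have hs0 : 0 < s := hsdef ▸ Real.sqrt_pos.mpr (by linarith)
  have hs2 : s^2 = 2*L := hsdef ▸ Real.sq_sqrt (by linarith)
  have hexp0 : Real.exp (-L) = δ/1.25 := by
    rw [hLdef, Real.exp_neg, Real.exp_log (by positivity), inv_div]
  have hexp : Real.exp (-L) = (4/5)*δ := by rw [hexp0]; ring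
  rw [gaussianReal_apply_eq_integral 0 one_ne_zero]
  refine (ENNReal.ofReal_le_ofReal ?_)
  have hq2 : s*(ε/(2*s)) = ε/2 := by field_simp
  rcases le_or_gt 0 t with ht | ht
  · refine (tail_pos t ht).trans ?_
    have expand : t^2 = s^2 - 2*(s*(ε/(2*s))) + (ε/(2*s))^2 := by rw [htdef]; ring
    rw [hq2] at expand
    have ht2' : 2*L - ε ≤ t^2 := by nlinarith [sq_nonneg (ε/(2*s))]
    have h1 : Real.exp (-(t^2)/2) ≤ Real.exp (1/2) * Real.exp (-L) := by
      rw [← Real.exp_add]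
      exact Real.exp_le_exp.mpr (by linarith)
    have h2 : Real.exp (1/2) ≤ 5/2 := by
      have hsq : Real.exp (1/2) * Real.exp (1/2) = Real.exp 1 := by
        rw [← Real.exp_add]; norm_num
      have he : Real.exp 1 < 2.7182818286 := Real.exp_one_lt_d9
      have he' : Real.exp 1 < 3 := by norm_num at he ⊢; linarith
      nlinarith [Real.exp_pos (1/2 : ℝ)]
    have h3 : Real.exp (1/2) * Real.exp (-L) ≤ (5/2) * ((4/5)*δ) := by
      rw [hexp]
      exact mul_le_mul_of_nonneg_right h2 (by positivity)
    linarith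
  · refine (tail_neg t ht).trans ?_
    have hL4 : L < 1/4 := by
      have h' : s < ε/(2*s) := by
        have := htdef ▸ ht
        linarith
      have : s*s < ε/2 := by
        calc s*s < (ε/(2*s))*s := by nlinarith
          _ = ε/2 := by rw [mul_comm]; exact hq2
      nlinarith
    have hLlb : (1/5:ℝ) ≤ L := by
      have h := Real.one_sub_inv_le_log_of_pos (by positivity : (0:ℝ) < 1.25/δ)
      rw [inv_div, ← hLdef] at h
      have h2 : δ/1.25 = (4/5)*δ := by ring
      rw [h2] at h
      linarith
    have hslb : (63/100:ℝ) ≤ s := by nlinarith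
    have hmt : -t ≤ 100/126 := by
      have h1 : ε/(2*s) ≤ 1/(2*s) := by gcongr
      have h2 : 1/(2*s) ≤ 100/126 := by
        rw [div_le_div_iff₀ (by linarith) (by norm_num)]
        linarith
      rw [htdef]
      linarith
    have hsqrt2pi : (5/2:ℝ) ≤ Real.sqrt (2*π) := by
      have h2pi : (25/4:ℝ) ≤ 2*π := by nlinarith [Real.pi_gt_d6]
      nlinarith [Real.sq_sqrt (by positivity : (0:ℝ) ≤ 2*π), Real.sqrt_nonneg (2*π)]
    have hinv : (Real.sqrt (2*π))⁻¹ ≤ 2/5 := by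
      rw [inv_le_comm₀ (by linarith) (by norm_num)]
      linarith
    have hδlb : (15/16:ℝ) ≤ δ := by
      have h := Real.add_one_le_exp (-L)
      rw [hexp] at h
      linarith
    have hprod : (-t) * (Real.sqrt (2*π))⁻¹ ≤ (100/126) * (2/5) :=
      mul_le_mul hmt hinv (by positivity) (by norm_num)
    linarith

lemma thresh (σ ε Δ t b : ℝ) (hσ : 0 < σ) (hε : 0 < ε) (hΔ : 0 < Δ) (hb0 : 0 < b)
    (hbΔ : b ≤ Δ) (hts : t = σ*ε/Δ - Δ/(2*σ)) : t*(2*σ*b) ≤ 2*σ^2*ε - b^2 := by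
  have expand : (σ*ε/Δ - Δ/(2*σ))*(2*σ*b) = 2*σ^2*ε*(b/Δ) - Δ*b := by field_simp
  rw [hts, expand]
  have h1 : 2*σ^2*ε*(b/Δ) ≤ 2*σ^2*ε := by
    have hb1 : b/Δ ≤ 1 := (div_le_one hΔ).mpr hbΔ
    nlinarith [mul_nonneg (by positivity : (0:ℝ) ≤ 2*σ^2*ε) (sub_nonneg.mpr hb1)]
  nlinarith

lemma pdf_ratio (σ ε : ℝ) (hσ : 0 < σ) (hε : 0 ≤ ε) (μ μ' x : ℝ)
    (hx : (μ-μ')*(2*x-μ-μ') ≤ 2*σ^2*ε) :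
    gaussianPDFReal μ (⟨σ^2, sq_nonneg σ⟩ : NNReal) x
      ≤ Real.exp ε * gaussianPDFReal μ' (⟨σ^2, sq_nonneg σ⟩ : NNReal) x := by
  show (√(2*π*σ^2))⁻¹ * rexp (-(x-μ)^2/(2*σ^2))
    ≤ rexp ε * ((√(2*π*σ^2))⁻¹ * rexp (-(x-μ')^2/(2*σ^2)))
  have hσ2 : (0:ℝ) < 2*σ^2 := by positivity
  have key : Real.exp (-(x-μ)^2/(2*σ^2)) ≤ Real.exp ε * Real.exp (-(x-μ')^2/(2*σ^2)) := by
    rw [← Real.exp_add]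
    apply Real.exp_le_exp.mpr
    have hdif : -(x-μ)^2/(2*σ^2) - (-(x-μ')^2/(2*σ^2)) = ((μ-μ')*(2*x-μ-μ'))/(2*σ^2) := by
      field_simp; ring
    have hle : ((μ-μ')*(2*x-μ-μ'))/(2*σ^2) ≤ ε := by
      rw [div_le_iff₀ hσ2]; linarith
    linarith [hdif ▸ hle]
  calc (√(2*π*σ^2))⁻¹ * rexp (-(x-μ)^2/(2*σ^2))
      ≤ (√(2*π*σ^2))⁻¹ * (rexp ε * rexp (-(x-μ')^2/(2*σ^2))) :=
        mul_le_mul_of_nonneg_left key (by positivity)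
    _ = rexp ε * ((√(2*π*σ^2))⁻¹ * rexp (-(x-μ')^2/(2*σ^2))) := by ring

set_option maxHeartbeats 1000000 in
theorem gaussian_mechanism_dp (Δ ε δ : ℝ) (hΔ : 0 < Δ) (hε0 : 0 < ε) (hε1 : ε < 1)
    (hδ0 : 0 < δ) (hδ1 : δ < 1)
    (σ : ℝ) (hσ : σ = Real.sqrt (2 * Real.log (1.25 / δ)) * Δ / ε) :
    ∀ μ μ' : ℝ, |μ - μ'| ≤ Δ → ∀ S : Set ℝ, MeasurableSet S →
      gaussianReal μ (⟨σ ^ 2, sq_nonneg σ⟩ : NNReal) S ≤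
        ENNReal.ofReal (Real.exp ε) * gaussianReal μ' (⟨σ ^ 2, sq_nonneg σ⟩ : NNReal) S +
          ENNReal.ofReal δ := by
  intro μ μ' hμμ' S hS
  set L : ℝ := Real.log (1.25/δ) with hLdef
  set s : ℝ := Real.sqrt (2*L) with hsdef
  set t : ℝ := s - ε/(2*s) with htdef
  have hq : (1:ℝ) < 1.25/δ := by rw [lt_div_iff₀ hδ0]; linarith
  have hL0 : 0 < L := Real.log_pos hq
  have hs0 : 0 < s := Real.sqrt_pos.mpr (by linarith)
  have hσ0 : 0 < σ := by rw [hσ]; positivity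
  set v : NNReal := (⟨σ ^ 2, sq_nonneg σ⟩ : NNReal) with hvdef
  have hvne : v ≠ 0 := by
    intro h
    have : (v : ℝ) = 0 := by rw [h]; rfl
    have : σ^2 = 0 := this
    nlinarith
  have hts : t = σ*ε/Δ - Δ/(2*σ) := by
    rw [htdef, hσ]
    field_simp
  set a : ℝ := μ - μ' with hadef
  set B : Set ℝ := {x : ℝ | 2*σ^2*ε < a * (2*x - μ - μ')} with hBdef
  have hBmeas : MeasurableSet B := measurableSet_lt measurable_const (by fun_prop)
  -- good part
  have hgood : gaussianReal μ v (S ∩ Bᶜ) ≤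
      ENNReal.ofReal (Real.exp ε) * gaussianReal μ' v S := by
    have hmono : ∀ x ∈ S ∩ Bᶜ, gaussianPDF μ v x ≤
        ENNReal.ofReal (Real.exp ε) * gaussianPDF μ' v x := by
      intro x hx
      have hxB : (μ-μ')*(2*x-μ-μ') ≤ 2*σ^2*ε := by
        have := hx.2
        simp only [hBdef, Set.mem_compl_iff, Set.mem_setOf_eq, not_lt] at this
        exact this
      rw [gaussianPDF, gaussianPDF, ← ENNReal.ofReal_mul (Real.exp_nonneg ε)]
      exact ENNReal.ofReal_le_ofReal (pdf_ratio σ ε hσ0 hε0.le μ μ' x hxB)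
    calc gaussianReal μ v (S ∩ Bᶜ)
        = ∫⁻ x in S ∩ Bᶜ, gaussianPDF μ v x := gaussianReal_apply μ hvne _
      _ ≤ ∫⁻ x in S ∩ Bᶜ, ENNReal.ofReal (Real.exp ε) * gaussianPDF μ' v x :=
          setLIntegral_mono ((measurable_gaussianPDF μ' v).const_mul _) hmono
      _ = ENNReal.ofReal (Real.exp ε) * ∫⁻ x in S ∩ Bᶜ, gaussianPDF μ' v x :=
          lintegral_const_mul _ (measurable_gaussianPDF μ' v)
      _ = ENNReal.ofReal (Real.exp ε) * gaussianReal μ' v (S ∩ Bᶜ) := by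
          rw [gaussianReal_apply μ' hvne]
      _ ≤ ENNReal.ofReal (Real.exp ε) * gaussianReal μ' v S :=
          mul_le_mul_right (measure_mono Set.inter_subset_left) _
  -- bad part
  have hbad : gaussianReal μ v B ≤ ENNReal.ofReal δ := by
    rcases eq_or_ne a 0 with ha | ha
    · have hBempty : B = ∅ := by
        ext x
        simp only [hBdef, Set.mem_setOf_eq, ha, zero_mul, Set.mem_empty_iff_false, iff_false,
          not_lt]
        positivity
      rw [hBempty]
      simp
    · have hmap : gaussianReal μ v = Measure.map (fun z => σ * z + μ) (gaussianReal 0 1) := by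
        have h1 : Measure.map (fun z : ℝ => σ * z) (gaussianReal 0 1) = gaussianReal 0 v := by
          have := gaussianReal_map_const_mul (μ := 0) (v := 1) σ
          simp only [mul_zero] at this
          rw [show (fun z : ℝ => σ * z) = (σ * ·) from rfl, this]
          congr 1
          rw [mul_one]
          exact hvdef.symm
        have h2 : Measure.map (fun z : ℝ => z + μ) (gaussianReal 0 v) = gaussianReal μ v := by
          have := gaussianReal_map_add_const (μ := 0) (v := v) μ
          rw [show (fun z : ℝ => z + μ) = (· + μ) from rfl, this, zero_add]
        rw [← h2, ← h1, Measure.map_map (by fun_prop) (by fun_prop)]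
        rfl
      rw [hmap, Measure.map_apply (by fun_prop) hBmeas]
      have htail := tail_le_delta ε δ L s t hε0 hε1 hδ0 hδ1 hLdef hsdef htdef
      have habs := abs_le.mp hμμ'
      rcases ha.lt_or_gt with hneg | hpos
      · -- a < 0 : preimage ⊆ Iio (-t)
        have hsub : (fun z => σ * z + μ) ⁻¹' B ⊆ Set.Iio (-t) := by
          intro z hz
          simp only [hBdef, Set.mem_preimage, Set.mem_setOf_eq] at hz
          have hkey : t*(2*σ*(-a)) ≤ 2*σ^2*ε - (-a)^2 :=
            thresh σ ε Δ t (-a) hσ0 hε0 hΔ (by linarith) (by linarith [habs.1]) hts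
          have hz' : 2*σ^2*ε < 2*σ*a*z + a^2 := by nlinarith [hz]
          have hc : 2*σ*a < 0 := by nlinarith [mul_pos hσ0 (neg_pos.mpr hneg)]
          have h2 : 0 < (z+t)*(2*σ*a) := by nlinarith [hkey, hz']
          simp only [Set.mem_Iio]
          nlinarith [h2, hc]
        have hsym : gaussianReal 0 1 (Set.Iio (-t)) = gaussianReal 0 1 (Set.Ioi t) := by
          have hone : (⟨(-1:ℝ)^2, sq_nonneg _⟩ : NNReal) * 1 = 1 := by
            ext; norm_num
          have hnegmap : Measure.map (fun z : ℝ => -1 * z) (gaussianReal 0 1)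
              = gaussianReal 0 1 := by
            rw [show (fun z : ℝ => -1 * z) = ((-1 : ℝ) * ·) from rfl,
              gaussianReal_map_const_mul (-1 : ℝ), mul_one, mul_zero]
            congr 1; ext; norm_num
          calc gaussianReal 0 1 (Set.Iio (-t))
              = (Measure.map (fun z : ℝ => -1 * z) (gaussianReal 0 1)) (Set.Iio (-t)) := by
                rw [hnegmap]
            _ = gaussianReal 0 1 ((fun z : ℝ => -1 * z) ⁻¹' (Set.Iio (-t))) :=
                Measure.map_apply (by fun_prop) measurableSet_Iio
            _ = gaussianReal 0 1 (Set.Ioi t) := by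
                congr 1
                ext z
                simp only [Set.mem_preimage, Set.mem_Iio, Set.mem_Ioi]
                constructor <;> intro h <;> linarith
        calc gaussianReal 0 1 ((fun z => σ * z + μ) ⁻¹' B)
            ≤ gaussianReal 0 1 (Set.Iio (-t)) := measure_mono hsub
          _ = gaussianReal 0 1 (Set.Ioi t) := hsym
          _ ≤ ENNReal.ofReal δ := htail
      · -- a > 0 : preimage ⊆ Ioi t
        have hsub : (fun z => σ * z + μ) ⁻¹' B ⊆ Set.Ioi t := by
          intro z hz
          simp only [hBdef, Set.mem_preimage, Set.mem_setOf_eq] at hz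
          have hkey : t*(2*σ*a) ≤ 2*σ^2*ε - a^2 :=
            thresh σ ε Δ t a hσ0 hε0 hΔ hpos habs.2 hts
          have hz' : 2*σ^2*ε < 2*σ*a*z + a^2 := by nlinarith [hz]
          have hc : (0:ℝ) < 2*σ*a := by nlinarith [mul_pos hσ0 hpos]
          have h2 : t * (2*σ*a) < z * (2*σ*a) := by nlinarith [hkey, hz']
          simp only [Set.mem_Ioi]
          exact (mul_lt_mul_iff_left₀ hc).mp h2
        exact (measure_mono hsub).trans htail
  -- assemble
  have hsub : S ⊆ (S ∩ Bᶜ) ∪ B := by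
    intro x hx
    by_cases hxB : x ∈ B
    · exact Or.inr hxB
    · exact Or.inl ⟨hx, hxB⟩
  calc gaussianReal μ v S
      ≤ gaussianReal μ v ((S ∩ Bᶜ) ∪ B) := measure_mono hsub
    _ ≤ gaussianReal μ v (S ∩ Bᶜ) + gaussianReal μ v B := measure_union_le _ _
    _ ≤ ENNReal.ofReal (Real.exp ε) * gaussianReal μ' v S + ENNReal.ofReal δ :=
        add_le_add hgood hbad
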